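/- Let n ≥ 1 and let ξ be a symmetric canonical element for the integer lattice ℤ^n of Sp(n), with coordinates a_1 ≥ a_2 ≥ … ≥ a_n ≥ 0. Set m_ξ^+ = 2·#{j : a_j is odd} and m_ξ^- = 2·#{j : a_j is even}, assume m_ξ^+ ≤ m_ξ^-, and write m = m_ξ^+/2 (so that the associated inner symmetric space N_ξ is the quaternionic Grassmannian G^ℍ_m(n)). Then for every k with 1 ≤ k ≤ n−2m+1 one has 2(a_1+⋯+a_k) ≤ 4mk, and for every k with n−2m+1 < k ≤ n one has 2(a_1+⋯+a_k) ≤ 4m(n−2m+1) + (k−n+2m−1)(2m+n−k). In particular 2a_1 ≤ 4m, and 2(a_1+a_2) ≤ 8m if 2m < n while 2(a_1+a_2) ≤ 8m−2 if 2m = n. -/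

import Mathlib

open scoped Classical

/-- The duals of the simple roots of `sp(n)` (1-based index):
`H_i = E_1+⋯+E_i` for `i ≤ n-1` and `H_n = (E_1+⋯+E_n)/2`. -/
noncomputable def Hsp (n i : ℕ) : Fin n → ℝ :=
  if i = n then fun _ => 1 / 2 else fun j => if (j : ℕ) + 1 ≤ i then 1 else 0

/-- The integer lattice `ℤ^n` inside `ℝ^n` (the integer lattice of `Sp(n)`). -/
def IntLat (n : ℕ) : Set (Fin n → ℝ) := {v | ∀ j, ∃ m : ℤ, v j = m}

/-- The set of symmetric canonical elements for a lattice `𝔏 ⊆ ℝ^n`. -/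
def SymCanonSet (n : ℕ) (𝔏 : Set (Fin n → ℝ)) (H : ℕ → Fin n → ℝ) :
    Set (Fin n → ℝ) :=
  {ξ | ∃ c : ℕ → ℕ, ξ = ∑ i ∈ Finset.Icc 1 n, c i • H i ∧ ξ ∈ 𝔏 ∧
    ∀ c' : ℕ → ℕ, (∀ i ∈ Finset.Icc 1 n, c' i ≤ c i) →
      (∑ i ∈ Finset.Icc 1 n, c' i • H i) ∈ 𝔏 →
      (ξ - ∑ i ∈ Finset.Icc 1 n, c' i • H i) ∈ (fun v => (2 : ℝ) • v) '' 𝔏 →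
      (∑ i ∈ Finset.Icc 1 n, c' i • H i) = ξ}

/-- Sum of the first `k` (1-based) coordinates of `v`. -/
def partialSum (n : ℕ) (v : Fin n → ℝ) (k : ℕ) : ℝ :=
  ∑ j ∈ Finset.univ.filter (fun j : Fin n => (j : ℕ) + 1 ≤ k), v j

/-- Number of coordinates of `v` equal to an odd integer. -/
noncomputable def nOdd (n : ℕ) (v : Fin n → ℝ) : ℕ :=
  (Finset.univ.filter fun j : Fin n => ∃ m : ℤ, Odd m ∧ v j = m).card

/-- Number of coordinates of `v` equal to an even integer. -/
noncomputable def nEven (n : ℕ) (v : Fin n → ℝ) : ℕ :=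
  (Finset.univ.filter fun j : Fin n => ∃ m : ℤ, Even m ∧ v j = m).card

/-- Uniton-number bounds for a symmetric canonical element `ξ` of
`Sp(n)` associated with the quaternionic Grassmannian `G^ℍ_m(n)`, where
`m_ξ^+ = 2·#{j : a_j odd} ≤ m_ξ^- = 2·#{j : a_j even}` and `m = m_ξ^+/2`. -/
theorem sp_symmetric_uniton_bounds (n : ℕ) (hn : 1 ≤ n) (ξ : Fin n → ℝ)
    (hξ : ξ ∈ SymCanonSet n (IntLat n) (Hsp n))
    (hdec : ∀ j k : Fin n, j ≤ k → ξ k ≤ ξ j) (hpos : ∀ j, 0 ≤ ξ j)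
    (hle : 2 * nOdd n ξ ≤ 2 * nEven n ξ)
    (m : ℕ) (hm : m = nOdd n ξ) :
    (∀ k : ℕ, 1 ≤ k → k ≤ n - 2 * m + 1 →
      2 * partialSum n ξ k ≤ 4 * (m : ℝ) * k) ∧
    (∀ k : ℕ, n - 2 * m + 1 < k → k ≤ n →
      2 * partialSum n ξ k ≤
        4 * (m : ℝ) * ((n : ℝ) - 2 * m + 1) +
          ((k : ℝ) - n + 2 * m - 1) * (2 * (m : ℝ) + n - k)) ∧
    2 * partialSum n ξ 1 ≤ 4 * (m : ℝ) ∧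
    (2 * m < n → 2 * partialSum n ξ 2 ≤ 8 * (m : ℝ)) ∧
    (2 * m = n → 2 * partialSum n ξ 2 ≤ 8 * (m : ℝ) - 2) := by
  obtain ⟨c, hrep, hlat, hmin⟩ := hξ
  choose b hb using hlat
  have hn0 : 0 < n := hn
  -- value of Hsp
  have hH : ∀ (i : ℕ) (j : Fin n), Hsp n i j
      = if i = n then 1/2 else if (j : ℕ) + 1 ≤ i then 1 else 0 := by
    intro i j; unfold Hsp; split <;> rfl
  -- pointwise sum formula
  have hsum : ∀ (d : ℕ → ℕ) (j : Fin n),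
      (∑ i ∈ Finset.Icc 1 n, d i • Hsp n i) j
        = ∑ i ∈ Finset.Icc 1 n, (d i : ℝ) * Hsp n i j := by
    intro d j
    rw [Finset.sum_apply]
    exact Finset.sum_congr rfl fun i _ => by simp [nsmul_eq_mul]
  have hξval : ∀ j : Fin n, ξ j = ∑ i ∈ Finset.Icc 1 n, (c i : ℝ) * Hsp n i j := by
    intro j; rw [hrep]; exact hsum c j
  set jlast : Fin n := ⟨n - 1, by omega⟩ with hjlast
  have hlco : ((jlast : Fin n) : ℕ) = n - 1 := rfl
  -- last coordinate
  have hlastval : ξ jlast = (c n : ℝ) / 2 := by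
    rw [hξval]
    rw [Finset.sum_eq_single n]
    · rw [hH, if_pos rfl]; ring
    · intro i hi hne
      rw [hH]
      rw [if_neg hne, if_neg (show ¬((jlast : ℕ) + 1 ≤ i) by rw [hlco]; rcases Finset.mem_Icc.mp hi with ⟨h1, h2⟩; omega)]
      ring
    · intro h; exact absurd (Finset.mem_Icc.mpr ⟨hn, le_rfl⟩) h
  -- consecutive differences
  have hstepval : ∀ (j : ℕ) (hj0 : j < n) (hj : j + 1 < n),
      ξ ⟨j, hj0⟩ - ξ ⟨j + 1, hj⟩ = (c (j+1) : ℝ) := by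
    intro j hj0 hj
    have h1 : ((⟨j, hj0⟩ : Fin n) : ℕ) = j := rfl
    have h2 : ((⟨j + 1, hj⟩ : Fin n) : ℕ) = j + 1 := rfl
    rw [hξval, hξval, ← Finset.sum_sub_distrib]
    rw [Finset.sum_eq_single (j+1)]
    · rw [hH, hH, h1, h2]
      have hc1 : ¬(j + 1 = n) := by omega
      have hc2 : ¬(j + 1 + 1 ≤ j + 1) := by omega
      simp only [if_neg hc1, if_pos (le_refl (j + 1)), if_neg hc2]
      ring
    · intro i hi hne
      rcases Finset.mem_Icc.mp hi with ⟨hi1, hi2⟩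
      rw [hH, hH, h1, h2]
      split_ifs <;> first | ring1 | (exfalso; omega)
    · intro h; exact absurd (Finset.mem_Icc.mpr ⟨by omega, by omega⟩) h
  -- c i ≤ 1 for 1 ≤ i < n
  have hc1 : ∀ i : ℕ, 1 ≤ i → i < n → c i ≤ 1 := by
    intro i hi1 hi2
    by_contra hcon
    push_neg at hcon
    have h2ci : 2 ≤ c i := hcon
    have hin : i ≠ n := by omega
    set c' : ℕ → ℕ := Function.update c i (c i - 2) with hc'
    have hred : ∀ j : Fin n, (∑ i' ∈ Finset.Icc 1 n, c' i' • Hsp n i') j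
        = ξ j - 2 * Hsp n i j := by
      intro j
      rw [hsum c' j, hξval j]
      have hmem : i ∈ Finset.Icc 1 n := Finset.mem_Icc.mpr ⟨hi1, by omega⟩
      rw [← Finset.add_sum_erase _ (fun i' => (c' i' : ℝ) * Hsp n i' j) hmem,
        ← Finset.add_sum_erase _ (fun i' => (c i' : ℝ) * Hsp n i' j) hmem]
      have he : ∑ i' ∈ (Finset.Icc 1 n).erase i, (c' i' : ℝ) * Hsp n i' j
          = ∑ i' ∈ (Finset.Icc 1 n).erase i, (c i' : ℝ) * Hsp n i' j := by
        refine Finset.sum_congr rfl fun i' hi' => ?_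
        rw [hc', Function.update_of_ne (Finset.ne_of_mem_erase hi')]
      rw [he, hc']
      simp only [Function.update_self]
      have hcast : ((c i - 2 : ℕ) : ℝ) = (c i : ℝ) - 2 := by
        have : ((c i - 2 : ℕ) : ℤ) = (c i : ℤ) - 2 := by omega
        exact_mod_cast this
      rw [hcast]; ring
    have p1 : ∀ i' ∈ Finset.Icc 1 n, c' i' ≤ c i' := by
      intro i' _
      rcases eq_or_ne i' i with rfl | hne
      · rw [hc', Function.update_self]; omega
      · rw [hc', Function.update_of_ne hne]
    have p2 : (∑ i' ∈ Finset.Icc 1 n, c' i' • Hsp n i') ∈ IntLat n := by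
      intro j
      refine ⟨b j - (if (j : ℕ) + 1 ≤ i then 2 else 0), ?_⟩
      rw [hred j, hH, if_neg hin, hb j]
      split_ifs <;> push_cast <;> ring
    have p3 : (ξ - ∑ i' ∈ Finset.Icc 1 n, c' i' • Hsp n i')
        ∈ (fun v => (2:ℝ) • v) '' IntLat n := by
      refine ⟨Hsp n i, fun j => ⟨if (j : ℕ) + 1 ≤ i then 1 else 0, ?_⟩, ?_⟩
      · rw [hH, if_neg hin]; split_ifs <;> simp
      · funext j
        simp only [Pi.smul_apply, Pi.sub_apply, smul_eq_mul]
        rw [hred j]; ring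
    have heq := hmin c' p1 p2 p3
    have h0 := congrFun heq ⟨0, hn0⟩
    rw [hred ⟨0, hn0⟩, hH, if_neg hin,
      if_pos (show ((⟨0, hn0⟩ : Fin n) : ℕ) + 1 ≤ i from hi1)] at h0
    linarith [h0]
  -- c n ≤ 3
  have hcn : c n ≤ 3 := by
    by_contra hcon
    push_neg at hcon
    have h4 : 4 ≤ c n := hcon
    set c' : ℕ → ℕ := Function.update c n (c n - 4) with hc'
    have hred : ∀ j : Fin n, (∑ i' ∈ Finset.Icc 1 n, c' i' • Hsp n i') j = ξ j - 2 := by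
      intro j
      rw [hsum c' j, hξval j]
      have hmem : n ∈ Finset.Icc 1 n := Finset.mem_Icc.mpr ⟨hn, le_rfl⟩
      rw [← Finset.add_sum_erase _ (fun i' => (c' i' : ℝ) * Hsp n i' j) hmem,
        ← Finset.add_sum_erase _ (fun i' => (c i' : ℝ) * Hsp n i' j) hmem]
      have he : ∑ i' ∈ (Finset.Icc 1 n).erase n, (c' i' : ℝ) * Hsp n i' j
          = ∑ i' ∈ (Finset.Icc 1 n).erase n, (c i' : ℝ) * Hsp n i' j := by
        refine Finset.sum_congr rfl fun i' hi' => ?_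
        rw [hc', Function.update_of_ne (Finset.ne_of_mem_erase hi')]
      rw [he, hc']
      simp only [Function.update_self]
      rw [hH, if_pos rfl]
      have hcast : ((c n - 4 : ℕ) : ℝ) = (c n : ℝ) - 4 := by
        have : ((c n - 4 : ℕ) : ℤ) = (c n : ℤ) - 4 := by omega
        exact_mod_cast this
      rw [hcast]; ring
    have p1 : ∀ i' ∈ Finset.Icc 1 n, c' i' ≤ c i' := by
      intro i' _
      rcases eq_or_ne i' n with rfl | hne
      · rw [hc', Function.update_self]; omega
      · rw [hc', Function.update_of_ne hne]
    have p2 : (∑ i' ∈ Finset.Icc 1 n, c' i' • Hsp n i') ∈ IntLat n := by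
      intro j
      refine ⟨b j - 2, ?_⟩
      rw [hred j, hb j]; push_cast; ring
    have p3 : (ξ - ∑ i' ∈ Finset.Icc 1 n, c' i' • Hsp n i')
        ∈ (fun v => (2:ℝ) • v) '' IntLat n := by
      refine ⟨fun _ => (1:ℝ), fun j => ⟨1, by norm_num⟩, ?_⟩
      funext j
      simp only [Pi.smul_apply, Pi.sub_apply, smul_eq_mul]
      rw [hred j]; ring
    have heq := hmin c' p1 p2 p3
    have h0 := congrFun heq ⟨0, hn0⟩
    rw [hred ⟨0, hn0⟩] at h0
    linarith [h0]
  -- integer coordinate facts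
  have hblast2 : (2 : ℤ) * b jlast = c n := by
    have : (2:ℝ) * ((b jlast : ℤ) : ℝ) = ((c n : ℕ) : ℝ) := by
      rw [← hb jlast, hlastval]; ring
    exact_mod_cast this
  have hblast : b jlast ≤ 1 := by omega
  have hbnn : ∀ j : Fin n, 0 ≤ b j := fun j => by
    have h := hpos j; rw [hb j] at h; exact_mod_cast h
  have hbmono : ∀ j k : Fin n, j ≤ k → b k ≤ b j := fun j k hjk => by
    have h := hdec j k hjk; rw [hb j, hb k] at h; exact_mod_cast h
  have hbstep : ∀ (j : ℕ) (hj0 : j < n) (hj : j + 1 < n),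
      b ⟨j, hj0⟩ ≤ b ⟨j + 1, hj⟩ + 1 := by
    intro j hj0 hj
    have h := hstepval j hj0 hj
    have hcc := hc1 (j+1) (by omega) hj
    have hr : (b ⟨j, hj0⟩ : ℝ) ≤ (b ⟨j+1, hj⟩ : ℝ) + 1 := by
      rw [← hb ⟨j, hj0⟩, ← hb ⟨j+1, hj⟩]
      have : (c (j+1) : ℝ) ≤ 1 := by exact_mod_cast hcc
      linarith [h]
    exact_mod_cast hr
  have hbub : ∀ (j : ℕ) (hj : j < n), (b ⟨j, hj⟩ : ℤ) + (j : ℤ) ≤ n := by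
    have aux : ∀ t : ℕ, ∀ (j : ℕ) (hj : j < n), j + t + 1 = n →
        b ⟨j, hj⟩ ≤ 1 + (t : ℤ) := by
      intro t
      induction t with
      | zero =>
        intro j hj hjn
        have he : (⟨j, hj⟩ : Fin n) = jlast := Fin.ext (show j = n - 1 by omega)
        rw [he]; omega
      | succ t ih =>
        intro j hj hjn
        have hj1 : j + 1 < n := by omega
        have h1 := hbstep j hj hj1
        have h2 := ih (j+1) hj1 (by omega)
        push_cast
        push_cast at h2
        omega
    intro j hj
    have := aux (n - 1 - j) j hj (by omega)
    omega
  have hIVT : ∀ v : ℤ, b jlast ≤ v → ∀ t : ℕ, ∀ (j : ℕ) (hj : j < n),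
      j + t + 1 = n → v ≤ b ⟨j, hj⟩ → ∃ j' : Fin n, b j' = v := by
    intro v hv t
    induction t with
    | zero =>
      intro j hj hjn hvb
      have he : (⟨j, hj⟩ : Fin n) = jlast := Fin.ext (show j = n - 1 by omega)
      rw [he] at hvb
      exact ⟨jlast, by omega⟩
    | succ t ih =>
      intro j hj hjn hvb
      have hj1 : j + 1 < n := by omega
      by_cases hc : v ≤ b ⟨j+1, hj1⟩
      · exact ih (j+1) hj1 (by omega) hc
      · exact ⟨⟨j, hj⟩, by have := hbstep j hj hj1; omega⟩
  -- odd/even counting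
  have hmcard : m = (Finset.univ.filter fun j : Fin n => Odd (b j)).card := by
    rw [hm]; unfold nOdd
    congr 1
    ext j
    simp only [Finset.mem_filter, Finset.mem_univ, true_and]
    constructor
    · rintro ⟨mm, hmm, he⟩
      have hmb : mm = b j := by
        have : (mm : ℝ) = (b j : ℝ) := by rw [← he, hb j]
        exact_mod_cast this
      rwa [hmb] at hmm
    · intro h; exact ⟨b j, h, hb j⟩
  have hecard : nEven n ξ = (Finset.univ.filter fun j : Fin n => ¬ Odd (b j)).card := by
    unfold nEven
    congr 1
    ext j
    simp only [Finset.mem_filter, Finset.mem_univ, true_and]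
    constructor
    · rintro ⟨mm, hmm, he⟩
      have hmb : mm = b j := by
        have : (mm : ℝ) = (b j : ℝ) := by rw [← he, hb j]
        exact_mod_cast this
      rw [hmb] at hmm
      exact Int.not_odd_iff_even.mpr hmm
    · intro h; exact ⟨b j, Int.not_odd_iff_even.mp h, hb j⟩
  have h2mn : 2 * m ≤ n := by
    have hsplit := Finset.card_filter_add_card_filter_not
      (s := (Finset.univ : Finset (Fin n))) (p := fun j : Fin n => Odd (b j))
    rw [Finset.card_univ, Fintype.card_fin, ← hmcard, ← hecard] at hsplit
    rw [← hm, hecard] at hle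
    omega
  -- the top coordinate is at most 2m
  have htop : (b ⟨0, hn0⟩ : ℤ) ≤ 2 * m := by
    by_contra hcon
    push_neg at hcon
    have hf : ∀ t : ℕ, ∃ j' : Fin n, t ≤ m → b j' = 2 * t + 1 := by
      intro t
      by_cases ht : t ≤ m
      · obtain ⟨j', hj'⟩ := hIVT (2*t+1) (by omega) (n-1) 0 hn0 (by omega)
          (by push_cast; omega)
        exact ⟨j', fun _ => hj'⟩
      · exact ⟨⟨0, hn0⟩, fun h => absurd h ht⟩
    choose f hfs using hf
    have hmaps : ∀ t ∈ Finset.range (m+1),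
        f t ∈ Finset.univ.filter fun j : Fin n => Odd (b j) := by
      intro t ht
      simp only [Finset.mem_filter, Finset.mem_univ, true_and]
      have := hfs t (by simp only [Finset.mem_range] at ht; omega)
      rw [Int.odd_iff]
      omega
    have hinj : Set.InjOn f (Finset.range (m+1)) := by
      intro t1 h1 t2 h2 he
      simp only [Finset.coe_range, Set.mem_Iio] at h1 h2
      have e1 := hfs t1 (by omega)
      have e2 := hfs t2 (by omega)
      rw [he] at e1
      omega
    have hcard := Finset.card_le_card_of_injOn f hmaps hinj
    rw [Finset.card_range, ← hmcard] at hcard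
    omega
  have hball : ∀ j : Fin n, (b j : ℤ) ≤ 2 * m := by
    intro j
    refine le_trans (hbmono ⟨0, hn0⟩ j ?_) htop
    rw [Fin.le_def]
    exact Nat.zero_le _
  have hξle : ∀ j : Fin n, ξ j ≤ 2 * (m : ℝ) := fun j => by
    rw [hb j]; exact_mod_cast hball j
  -- partial sum bound, all k
  have key1 : ∀ k : ℕ, 2 * partialSum n ξ k ≤ 4 * (m : ℝ) * k := by
    intro k
    unfold partialSum
    have hcard : (Finset.univ.filter (fun j : Fin n => (j : ℕ) + 1 ≤ k)).card ≤ k := by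
      have h := Finset.card_le_card_of_injOn
        (s := Finset.univ.filter (fun j : Fin n => (j : ℕ) + 1 ≤ k))
        (t := Finset.range k) (fun j : Fin n => (j : ℕ))
        (fun j hj => Finset.mem_range.mpr
          (by have hj' := (Finset.mem_filter.mp (Finset.mem_coe.mp hj)).2; show (j : ℕ) < k; omega))
        (fun x _ y _ h => Fin.ext h)
      rwa [Finset.card_range] at h
    have hsum_le : ∑ j ∈ Finset.univ.filter (fun j : Fin n => (j : ℕ) + 1 ≤ k), ξ j
        ≤ ((Finset.univ.filter (fun j : Fin n => (j : ℕ) + 1 ≤ k)).card : ℝ) * (2 * m) := by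
      calc ∑ j ∈ Finset.univ.filter (fun j : Fin n => (j : ℕ) + 1 ≤ k), ξ j
          ≤ ∑ _j ∈ Finset.univ.filter (fun j : Fin n => (j : ℕ) + 1 ≤ k), 2 * (m:ℝ) :=
            Finset.sum_le_sum fun j _ => hξle j
        _ = _ := by rw [Finset.sum_const, nsmul_eq_mul]
    have hm0 : (0:ℝ) ≤ 2 * (m:ℝ) := by positivity
    have hc : ((Finset.univ.filter (fun j : Fin n => (j : ℕ) + 1 ≤ k)).card : ℝ) ≤ k := by
      exact_mod_cast hcard
    nlinarith [mul_le_mul_of_nonneg_right hc hm0]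
  -- adding one index
  have keystep : ∀ (k : ℕ) (hk : k < n),
      partialSum n ξ (k+1) = partialSum n ξ k + ξ ⟨k, hk⟩ := by
    intro k hk
    unfold partialSum
    have hset : Finset.univ.filter (fun j : Fin n => (j : ℕ) + 1 ≤ k + 1)
        = insert ⟨k, hk⟩ (Finset.univ.filter fun j : Fin n => (j : ℕ) + 1 ≤ k) := by
      ext j
      simp only [Finset.mem_filter, Finset.mem_univ, true_and, Finset.mem_insert]
      constructor
      · intro h
        rcases eq_or_ne ((j : ℕ)) k with heq | hne
        · left; exact Fin.ext heq
        · right; omega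
      · rintro (rfl | h)
        · exact Nat.le_refl _
        · omega
    rw [hset, Finset.sum_insert (by
      simp only [Finset.mem_filter, Finset.mem_univ, true_and]
      exact fun hcon => by omega)]
    ring
  -- bound for large k
  have key2 : ∀ t k : ℕ, k = (n - 2*m + 1) + t → k ≤ n →
      2 * partialSum n ξ k ≤ 4 * (m : ℝ) * ((n : ℝ) - 2 * m + 1) +
        ((k : ℝ) - n + 2 * m - 1) * (2 * (m : ℝ) + n - k) := by
    intro t
    induction t with
    | zero =>
      intro k hk hkn
      have hkZ : (k : ℤ) = (n : ℤ) - 2 * m + 1 := by omega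
      have hkR : (k : ℝ) = (n : ℝ) - 2 * m + 1 := by exact_mod_cast hkZ
      have h1 := key1 k
      rw [hkR] at h1 ⊢
      nlinarith [h1]
    | succ t ih =>
      intro k hk hkn
      have hk' : k - 1 = (n - 2*m + 1) + t := by omega
      have hkn' : k - 1 < n := by omega
      have ihh := ih (k-1) hk' (by omega)
      have hps := keystep (k-1) hkn'
      have hterm : ξ ⟨k-1, hkn'⟩ ≤ (n : ℝ) - ((k-1 : ℕ) : ℝ) := by
        rw [hb ⟨k-1, hkn'⟩]
        have hz : (b ⟨k-1, hkn'⟩ : ℤ) ≤ (n : ℤ) - ((k-1 : ℕ) : ℤ) := by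
          have := hbub (k-1) hkn'; omega
        exact_mod_cast hz
      have hkk : k - 1 + 1 = k := by omega
      rw [hkk] at hps
      have hcast : ((k-1 : ℕ) : ℝ) = (k : ℝ) - 1 := by
        have : ((k-1 : ℕ) : ℤ) = (k : ℤ) - 1 := by omega
        exact_mod_cast this
      rw [hps]
      rw [hcast] at hterm ihh
      have hid : 4 * (m : ℝ) * ((n : ℝ) - 2 * m + 1) +
          (((k : ℝ) - 1) - n + 2 * m - 1) * (2 * (m : ℝ) + n - ((k : ℝ) - 1)) +
          2 * ((n : ℝ) - ((k : ℝ) - 1)) =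
          4 * (m : ℝ) * ((n : ℝ) - 2 * m + 1) +
          ((k : ℝ) - n + 2 * m - 1) * (2 * (m : ℝ) + n - k) := by ring
      linarith [ihh, hterm]
  refine ⟨fun k _ _ => key1 k,
    fun k hk1 hk2 => key2 (k - (n - 2*m + 1)) k (by omega) hk2, ?_, ?_, ?_⟩
  · simpa using key1 1
  · intro _
    have h := key1 2
    push_cast at h
    linarith
  · intro h2m
    have hm1 : 1 ≤ m := by omega
    have h := key2 1 2 (by omega) (by omega)
    have hnR : (n : ℝ) = 2 * m := by exact_mod_cast h2m.symm
    rw [hnR] at h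
    push_cast at h
    nlinarith [h]
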